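/- Let φ : G → Homeo(X) be an expansive continuous action with expansive constant c > 0 of a finitely generated group G, with finite symmetric generating set S, on a compact metric space (X,d). Let l be a positive integer such that for any x, y ∈ X with d(x,y) ≥ c/2 one has max_{g∈G, |g|≤l} d(gx, gy) ≥ c, and let α > 1 be a real number with α^l < 2. Define n(x,y) = min{n ∈ ℕ : ∃ g ∈ G, |g| ≤ n, d(gx, gy) ≥ c} for x ≠ y, n(x,y) = ∞ otherwise, and ρ(x,y) = α^{-n(x,y)} (with α^{-∞} = 0). Then ρ is compatible with the topology of X: the balls B_ρ(x,r) = {y ∈ X : ρ(x,y) < r}, for x ∈ X and r > 0, form an open base of the topology of X. -/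
import Mathlib


open Pointwise Filter Metric Set Topology TopologicalSpace

/-- The group of self-homeomorphisms of `X`, with `(f * g) x = f (g x)`. -/
instance homeoGroup {X : Type*} [TopologicalSpace X] : Group (X ≃ₜ X) where
  mul f g := g.trans f
  one := Homeomorph.refl X
  inv := Homeomorph.symm
  mul_assoc _ _ _ := rfl
  one_mul _ := Homeomorph.ext fun _ => rfl
  mul_one _ := Homeomorph.ext fun _ => rfl
  inv_mul_cancel f := Homeomorph.ext f.symm_apply_apply

/-- The word length of `g` with respect to the (symmetric) generating set `S`:
the least `n` such that `g` is a product of `n` elements of `S`. -/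
noncomputable def wordLength {G : Type*} [Group G] (S : Set G) (g : G) : ℕ :=
  sInf {n : ℕ | g ∈ S ^ n}

/-- The growth function `β(G,S;k) = #{g ∈ G : |g| ≤ k}`. -/
noncomputable def growthFn {G : Type*} [Group G] (S : Set G) (k : ℕ) : ℕ :=
  Set.ncard {g : G | wordLength S g ≤ k}

/-- `G` has subexponential growth w.r.t. `S`: `lim_k β(G,S;k)^{1/k} ≤ 1`. -/
def SubexpGrowth {G : Type*} [Group G] (S : Set G) : Prop :=
  Filter.limsup (fun k : ℕ => (growthFn S k : ℝ) ^ (1 / (k : ℝ))) Filter.atTop ≤ 1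

/-- A continuum (here: a compact connected metric space, via instances) is Suslinian if
every family of pairwise disjoint nondegenerate subcontinua is countable. -/
def Suslinian (X : Type*) [MetricSpace X] : Prop :=
  ∀ 𝒜 : Set (Set X), (∀ A ∈ 𝒜, IsCompact A ∧ IsConnected A ∧ A.Nontrivial) →
    𝒜.Pairwise Disjoint → 𝒜.Countable

/-- `n(x,y)`: the least `n` such that `d(gx,gy) ≥ c` for some `g` with `|g| ≤ n`
(`∞` if there is no such `n`, in particular when `x = y`). -/
noncomputable def nIdx {G X : Type*} [Group G] [MetricSpace X] (S : Set G)
    (φ : G →* (X ≃ₜ X)) (c : ℝ) (x y : X) : ℕ∞ :=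
  sInf ((↑) '' {n : ℕ | ∃ g : G, wordLength S g ≤ n ∧ c ≤ dist (φ g x) (φ g y)})

/-- `ρ(x,y) = α^{-n(x,y)}`, with `α^{-∞} = 0`. -/
noncomputable def rho {G X : Type*} [Group G] [MetricSpace X] (S : Set G)
    (φ : G →* (X ≃ₜ X)) (c α : ℝ) (x y : X) : ℝ :=
  if nIdx S φ c x y = ⊤ then 0 else α ^ (-((nIdx S φ c x y).toNat : ℤ))

section myaux

variable {G : Type*} [Group G]

lemma my_exists_mem_pow (S : Set G) (hSsym : S⁻¹ = S) (hSgen : Subgroup.closure S = ⊤)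
    (g : G) : ∃ n : ℕ, g ∈ S ^ n := by
  have hg : g ∈ Subgroup.closure S := hSgen ▸ Subgroup.mem_top g
  induction hg using Subgroup.closure_induction with
  | mem x hx => exact ⟨1, by simpa using hx⟩
  | one => exact ⟨0, by simp⟩
  | mul x y hx hy ihx ihy =>
    obtain ⟨m, hm⟩ := ihx
    obtain ⟨n, hn⟩ := ihy
    exact ⟨m + n, by rw [pow_add]; exact Set.mul_mem_mul hm hn⟩
  | inv x hx ih =>
    obtain ⟨n, hn⟩ := ih
    refine ⟨n, ?_⟩
    have : x⁻¹ ∈ (S ^ n)⁻¹ := Set.inv_mem_inv.2 hn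
    rwa [← inv_pow, hSsym] at this

lemma my_mem_pow_wordLength (S : Set G) (hSsym : S⁻¹ = S) (hSgen : Subgroup.closure S = ⊤)
    (g : G) : g ∈ S ^ wordLength S g :=
  Nat.sInf_mem (my_exists_mem_pow S hSsym hSgen g)

lemma my_pow_finite {S : Set G} (hSfin : S.Finite) (n : ℕ) : (S ^ n).Finite := by
  induction n with
  | zero => simpa using Set.finite_singleton (1 : G)
  | succ k ih => rw [pow_succ]; exact ih.mul hSfin

lemma my_wl_finite {S : Set G} (hSfin : S.Finite) (hSsym : S⁻¹ = S)
    (hSgen : Subgroup.closure S = ⊤) (n : ℕ) : {g : G | wordLength S g ≤ n}.Finite := by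
  refine Set.Finite.subset ((Set.finite_Iic n).biUnion fun m _ => my_pow_finite hSfin m) ?_
  intro g hg
  exact Set.mem_biUnion hg (my_mem_pow_wordLength S hSsym hSgen g)

variable {X : Type*} [MetricSpace X]

lemma my_lt_nIdx_iff (S : Set G) (φ : G →* (X ≃ₜ X)) (c : ℝ) (x y : X) (n : ℕ) :
    (↑n < nIdx S φ c x y) ↔ ∀ g : G, wordLength S g ≤ n → dist (φ g x) (φ g y) < c := by
  constructor
  · intro h g hg
    by_contra hd
    push_neg at hd
    have hmem : (↑n : ℕ∞) ∈ (↑) '' {m : ℕ | ∃ g : G, wordLength S g ≤ m ∧ c ≤ dist (φ g x) (φ g y)} :=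
      ⟨n, ⟨g, hg, hd⟩, rfl⟩
    exact absurd (sInf_le hmem) (not_le.2 h)
  · intro h
    have hle : (↑(n + 1) : ℕ∞) ≤ nIdx S φ c x y := by
      apply le_sInf
      rintro a ⟨m, ⟨g, hgm, hd⟩, rfl⟩
      have hmn : ¬ m ≤ n := fun hmn => absurd hd (not_le.2 (h g (hgm.trans hmn)))
      exact_mod_cast by omega
    calc (↑n : ℕ∞) < ↑(n + 1) := by exact_mod_cast Nat.lt_succ_self n
    _ ≤ _ := hle

lemma my_rho_nonneg (S : Set G) (φ : G →* (X ≃ₜ X)) {c α : ℝ} (hα : 0 < α) (x y : X) :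
    0 ≤ rho S φ c α x y := by
  rw [rho]; split_ifs
  · exact le_refl 0
  · exact (zpow_pos hα _).le

lemma my_rho_le_one (S : Set G) (φ : G →* (X ≃ₜ X)) {c α : ℝ} (hα : 1 < α) (x y : X) :
    rho S φ c α x y ≤ 1 := by
  rw [rho]; split_ifs
  · exact zero_le_one
  · calc α ^ (-((nIdx S φ c x y).toNat : ℤ)) ≤ α ^ (0 : ℤ) :=
        zpow_le_zpow_right₀ hα.le (by omega)
    _ = 1 := zpow_zero α

lemma my_rho_le (S : Set G) (φ : G →* (X ≃ₜ X)) {c α : ℝ} (hα : 1 < α) {x y : X} {n : ℕ}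
    (h : (↑n : ℕ∞) < nIdx S φ c x y) : rho S φ c α x y ≤ α ^ (-(n + 1 : ℤ)) := by
  rw [rho]; split_ifs with ht
  · exact (zpow_pos (lt_trans one_pos hα) _).le
  · obtain ⟨m, hm⟩ : ∃ m : ℕ, nIdx S φ c x y = (m : ℕ∞) :=
      ⟨(nIdx S φ c x y).toNat, (ENat.coe_toNat ht).symm⟩
    rw [hm] at h ⊢
    rw [ENat.toNat_coe]
    have hnm : n < m := by exact_mod_cast h
    exact zpow_le_zpow_right₀ hα.le (by omega)

lemma my_lt_of_rho_lt (S : Set G) (φ : G →* (X ≃ₜ X)) {c α : ℝ} (hα : 1 < α) {x y : X} {n : ℕ}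
    (h : rho S φ c α x y < α ^ (-(n : ℤ))) : (↑n : ℕ∞) < nIdx S φ c x y := by
  rw [rho] at h
  split_ifs at h with ht
  · rw [ht]; exact_mod_cast WithTop.coe_lt_top (n : ℕ)
  · obtain ⟨m, hm⟩ : ∃ m : ℕ, nIdx S φ c x y = (m : ℕ∞) :=
      ⟨(nIdx S φ c x y).toNat, (ENat.coe_toNat ht).symm⟩
    rw [hm] at h ⊢
    rw [ENat.toNat_coe] at h
    have : -(m : ℤ) < -(n : ℤ) := (zpow_lt_zpow_iff_right₀ hα).1 h
    exact_mod_cast by omega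

end myaux


/-- `ρ` is compatible with the topology of `X`: the `ρ`-balls are open and they form
a base of the topology. -/
theorem rho_compatible
    {G : Type*} [Group G] (S : Set G) (hSfin : S.Finite) (hSsym : S⁻¹ = S)
    (hSgen : Subgroup.closure S = ⊤)
    {X : Type*} [MetricSpace X] [CompactSpace X] (φ : G →* (X ≃ₜ X))
    (c : ℝ) (hc : 0 < c)
    (hexp : ∀ x y : X, x ≠ y → c < ⨆ g : G, dist (φ g x) (φ g y))
    (l : ℕ) (hl : 0 < l)
    (hlsep : ∀ x y : X, c / 2 ≤ dist x y →
      ∃ g : G, wordLength S g ≤ l ∧ c ≤ dist (φ g x) (φ g y))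
    (α : ℝ) (hα : 1 < α) (hαl : α ^ l < 2) :
    (∀ (x : X) (r : ℝ), 0 < r → IsOpen {y | rho S φ c α x y < r}) ∧
    (∀ s : Set X, IsOpen s → ∀ x ∈ s, ∃ r > (0 : ℝ), {y | rho S φ c α x y < r} ⊆ s) := by
  have hα0 : (0:ℝ) < α := lt_trans one_pos hα
  have hUopen : ∀ (x : X) (n : ℕ),
      IsOpen {y : X | ∀ g : G, wordLength S g ≤ n → dist (φ g x) (φ g y) < c} := by
    intro x n
    have heq : {y : X | ∀ g : G, wordLength S g ≤ n → dist (φ g x) (φ g y) < c}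
        = ⋂ g ∈ {g : G | wordLength S g ≤ n}, {y : X | dist (φ g x) (φ g y) < c} := by
      ext y; simp [Set.mem_iInter]
    rw [heq]
    exact (my_wl_finite hSfin hSsym hSgen n).isOpen_biInter fun g _ =>
      isOpen_lt (Continuous.dist continuous_const (φ g).continuous) continuous_const
  constructor
  · intro x r hr
    rcases lt_or_ge 1 r with h1 | h1
    · have : {y : X | rho S φ c α x y < r} = Set.univ :=
        Set.eq_univ_of_forall fun y => lt_of_le_of_lt (my_rho_le_one S φ hα x y) h1
      rw [this]; exact isOpen_univ
    · rw [isOpen_iff_forall_mem_open]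
      intro y hy
      have hy' : rho S φ c α x y < r := hy
      obtain ⟨n, hn, hnr⟩ : ∃ n : ℕ, ((↑n : ℕ∞) < nIdx S φ c x y) ∧ α ^ (-(n + 1 : ℤ)) < r := by
        by_cases ht : nIdx S φ c x y = ⊤
        · obtain ⟨n, hn⟩ := exists_pow_lt_of_lt_one hr (inv_lt_one_of_one_lt₀ hα)
          refine ⟨n, ht ▸ (by exact_mod_cast WithTop.coe_lt_top (n : ℕ)), ?_⟩
          calc α ^ (-(n + 1 : ℤ)) ≤ α ^ (-(n : ℤ)) := zpow_le_zpow_right₀ hα.le (by omega)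
          _ = (α⁻¹) ^ n := by rw [zpow_neg, ← inv_zpow, zpow_natCast]
          _ < r := hn
        · obtain ⟨m, hm⟩ : ∃ m : ℕ, nIdx S φ c x y = (m : ℕ∞) :=
            ⟨(nIdx S φ c x y).toNat, (ENat.coe_toNat ht).symm⟩
          have hrho : rho S φ c α x y = α ^ (-(m : ℤ)) := by
            rw [rho, if_neg ht, hm, ENat.toNat_coe]
          have hm1 : 1 ≤ m := by
            by_contra hm0
            have : m = 0 := by omega
            rw [hrho, this] at hy'
            simp at hy'
            linarith
          refine ⟨m - 1, ?_, ?_⟩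
          · rw [hm]; exact_mod_cast Nat.sub_lt hm1 one_pos
          · have : (-(↑(m - 1) + 1) : ℤ) = -(m : ℤ) := by
              have : (↑(m - 1) : ℤ) = (m : ℤ) - 1 := by omega
              rw [this]; ring
            rw [this, ← hrho]; exact hy'
      refine ⟨{y' : X | ∀ g : G, wordLength S g ≤ n → dist (φ g x) (φ g y') < c}, ?_, hUopen x n,
        (my_lt_nIdx_iff S φ c x y n).1 hn⟩
      intro y' hy''
      exact lt_of_le_of_lt (my_rho_le S φ hα ((my_lt_nIdx_iff S φ c x y' n).2 hy'')) hnr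
  · intro s hs x hx
    obtain ⟨ε, hε, hball⟩ := Metric.isOpen_iff.1 hs x hx
    have key : ∃ N : ℕ, ∀ u v : X,
        (∀ g : G, wordLength S g ≤ N → dist (φ g u) (φ g v) < c) → dist u v < ε := by
      by_contra hcon
      push_neg at hcon
      set K : ℕ → Set (X × X) := fun N => {p : X × X | ε ≤ dist p.1 p.2 ∧
        ∀ g : G, wordLength S g ≤ N → dist (φ g p.1) (φ g p.2) ≤ c} with hK
      have hclosed : ∀ N, IsClosed (K N) := by
        intro N
        have heq : K N = {p : X × X | ε ≤ dist p.1 p.2} ∩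
            ⋂ g : G, {p : X × X | wordLength S g ≤ N → dist (φ g p.1) (φ g p.2) ≤ c} := by
          ext p; simp [hK, Set.mem_iInter]
        rw [heq]
        refine IsClosed.inter (isClosed_le continuous_const continuous_dist) ?_
        refine isClosed_iInter fun g => ?_
        by_cases hg : wordLength S g ≤ N
        · simp only [hg, true_implies]
          exact isClosed_le (Continuous.dist ((φ g).continuous.comp continuous_fst)
            ((φ g).continuous.comp continuous_snd)) continuous_const
        · simp only [hg, false_implies, Set.setOf_true]
          exact isClosed_univ
      have hmono : ∀ N, K (N + 1) ⊆ K N := fun N p hp =>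
        ⟨hp.1, fun g hg => hp.2 g (hg.trans (Nat.le_succ N))⟩
      have hne : ∀ N, (K N).Nonempty := by
        intro N
        obtain ⟨u, v, h1, h2⟩ := hcon N
        exact ⟨(u, v), h2, fun g hg => (h1 g hg).le⟩
      obtain ⟨p, hp⟩ := IsCompact.nonempty_iInter_of_sequence_nonempty_isCompact_isClosed
        K hmono hne (hclosed 0).isCompact hclosed
      simp only [Set.mem_iInter] at hp
      have hpe : ε ≤ dist p.1 p.2 := (hp 0).1
      have hpne : p.1 ≠ p.2 := by
        intro h
        rw [h, dist_self] at hpe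
        linarith
      have hub : ∀ g : G, dist (φ g p.1) (φ g p.2) ≤ c :=
        fun g => (hp (wordLength S g)).2 g le_rfl
      have : Nonempty G := ⟨1⟩
      exact absurd (ciSup_le hub) (not_le.2 (hexp p.1 p.2 hpne))
    obtain ⟨N, hN⟩ := key
    refine ⟨α ^ (-(N : ℤ)), zpow_pos hα0 _, fun y hy => hball ?_⟩
    have h1 : (↑N : ℕ∞) < nIdx S φ c x y := my_lt_of_rho_lt S φ hα hy
    have h2 := (my_lt_nIdx_iff S φ c x y N).1 h1
    rw [Metric.mem_ball, dist_comm]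
    exact hN x y h2
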